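/- Let M be a loopless matroid on a finite ground set E with rank function r, let m ≥ 1, and let Q = Q_m(M) be the free m-cone of M with tip a. If F is a flat of Q with a ∉ F, then every element of F - E is a coloop of the restriction Q|F. -/

import Mathlib

open Set Matroid

namespace ConePaper

variable {α : Type*}

/-- The rank of a set in a matroid: the supremum of sizes of independent subsets. -/
noncomputable def rk (M : Matroid α) (X : Set α) : ℕ :=
  sSup {n : ℕ | ∃ I, M.Indep I ∧ I ⊆ X ∧ I.ncard = n}

/-- A loopless matroid: every singleton of the ground set is independent. -/
def Loopless (M : Matroid α) : Prop := ∀ e ∈ M.E, M.Indep {e}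

/-- A coloop: an element of the ground set lying in every base. -/
def IsColoop (M : Matroid α) (e : α) : Prop := e ∈ M.E ∧ ∀ B, M.IsBase B → e ∈ B

/-- A circuit: a minimal dependent set. -/
def IsCircuit (M : Matroid α) (C : Set α) : Prop :=
  C ⊆ M.E ∧ ¬ M.Indep C ∧ ∀ x ∈ C, M.Indep (C \ {x})

/-- A cyclic flat: a flat whose restriction has no coloops. -/
def CyclicFlat (M : Matroid α) (F : Set α) : Prop :=
  M.IsFlat F ∧ ∀ e ∈ F, ¬ IsColoop (M ↾ F) e

/-- Deletion of a set from a matroid. -/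
def mdel (M : Matroid α) (X : Set α) : Matroid α := M ↾ (M.E \ X)

/-- The cone `q(S) = S ∪ {a} ∪ ⋃_{e ∈ S} T e`. -/
def cone (T : α → Set α) (a : α) (S : Set α) : Set α := S ∪ {a} ∪ ⋃ e ∈ S, T e

/-- The projection `p(S) = (S ∩ E) ∪ {e ∈ E : S ∩ T e ≠ ∅}`. -/
def proj (E : Set α) (T : α → Set α) (S : Set α) : Set α :=
  (S ∩ E) ∪ {e ∈ E | (S ∩ T e).Nonempty}

/-- `FreeCone M Q T a m` says that `Q` is the free `m`-cone of the loopless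
matroid `M`, with extra points `T e` (of size `m`) for `e ∈ M.E` and tip `a`:
its cyclic flats are those of `M` (with the same rank) together with the cones
of nonempty flats of `M` (with rank one greater). -/
structure FreeCone (M Q : Matroid α) (T : α → Set α) (a : α) (m : ℕ) : Prop where
  hm : 1 ≤ m
  hMfin : M.E.Finite
  hloopless : Loopless M
  hTfin : ∀ e ∈ M.E, (T e).Finite
  hTcard : ∀ e ∈ M.E, (T e).ncard = m
  hTdisjE : ∀ e ∈ M.E, Disjoint (T e) M.E
  hTdisj : ∀ e ∈ M.E, ∀ f ∈ M.E, e ≠ f → Disjoint (T e) (T f)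
  ha : a ∉ M.E ∪ ⋃ e ∈ M.E, T e
  hQE : Q.E = M.E ∪ (⋃ e ∈ M.E, T e) ∪ {a}
  hcyclic : ∀ F, CyclicFlat Q F ↔
      (CyclicFlat M F ∨ ∃ F', M.IsFlat F' ∧ F'.Nonempty ∧ F = cone T a F')
  hrank1 : ∀ F, CyclicFlat M F → rk Q F = rk M F
  hrank2 : ∀ F', M.IsFlat F' → F'.Nonempty → rk Q (cone T a F') = rk M F' + 1

/-- A flag of a rank-`k` matroid: a chain of flats, one of each rank `0,…,k`. -/

lemma flat_of_closure_subset {Q : Matroid α} {Z : Set α} (hZE : Z ⊆ Q.E)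
    (h : Q.closure Z ⊆ Z) : Q.IsFlat Z := by
  refine ⟨fun I X hIZ hIX => ?_, hZE⟩
  have h2 : Q.closure I ⊆ Z := by rw [hIZ.closure_eq_closure]; exact h
  exact hIX.subset_closure.trans h2

/-- Key lemma: a non-coloop `e` of `Q ↾ F` lies in the closure of an independent
set all of whose elements are non-coloops of `Q ↾ F`. -/
lemma key_lemma {Q : Matroid α} {F : Set α} (hQfin : Q.E.Finite) (hF : Q.IsFlat F)
    {e : α} (he : e ∈ F) (hne : ¬ IsColoop (Q ↾ F) e) :
    ∃ I, Q.Indep I ∧ I ⊆ F ∧ (∀ f ∈ I, ¬ IsColoop (Q ↾ F) f) ∧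
      e ∈ Q.closure I ∧ e ∉ I := by
  have hFE : F ⊆ Q.E := hF.subset_ground
  -- extract a base of `Q ↾ F` avoiding `e`
  have heE : e ∈ (Q ↾ F).E := by rwa [restrict_ground_eq]
  obtain ⟨B, hB, heB⟩ : ∃ B, (Q ↾ F).IsBase B ∧ e ∉ B := by
    by_contra hcon
    push_neg at hcon
    exact hne ⟨heE, hcon⟩
  rw [isBase_restrict_iff hFE] at hB
  have heclB : e ∈ Q.closure B := hB.subset_closure he
  -- choose `I ⊆ B` of minimum cardinality with `e ∈ closure I`
  have hSne : {n : ℕ | ∃ I, I ⊆ B ∧ e ∈ Q.closure I ∧ I.ncard = n}.Nonempty :=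
    ⟨B.ncard, B, Subset.rfl, heclB, rfl⟩
  obtain ⟨I, hIB, hecl, hIcard⟩ := Nat.sInf_mem hSne
  have hmin : ∀ I', I' ⊆ B → e ∈ Q.closure I' → I.ncard ≤ I'.ncard := fun I' h1 h2 => by
    rw [hIcard]; exact Nat.sInf_le ⟨I', h1, h2, rfl⟩
  have hIF : I ⊆ F := hIB.trans hB.subset
  have hIfin : I.Finite := hQfin.subset (hIF.trans hFE)
  have hIind : Q.Indep I := hB.indep.subset hIB
  have heI : e ∉ I := fun h => heB (hIB h)
  refine ⟨I, hIind, hIF, fun f hfI => ?_, hecl, heI⟩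
  -- show each `f ∈ I` is a non-coloop of `Q ↾ F`
  have hfe : f ≠ e := fun h => heB (hIB (h ▸ hfI))
  have hnecl : e ∉ Q.closure (I \ {f}) := fun h => by
    have := hmin _ ((diff_subset).trans hIB) h
    exact absurd this (not_le.mpr (Set.ncard_diff_singleton_lt_of_mem hfI hIfin))
  have hex : f ∈ Q.closure (insert e (I \ {f})) := by
    have : e ∈ Q.closure (insert f (I \ {f})) \ Q.closure (I \ {f}) := by
      rw [Set.insert_diff_singleton, Set.insert_eq_of_mem hfI]
      exact ⟨hecl, hnecl⟩
    exact (Matroid.closure_exchange this).1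
  -- `B' = insert e (B \ {f})` spans `F`
  set B' : Set α := insert e (B \ {f}) with hB'def
  have hB'E : B' ⊆ Q.E := insert_subset (hFE he) ((diff_subset.trans hB.subset).trans hFE)
  have hfB' : f ∈ Q.closure B' := by
    refine Matroid.closure_subset_closure Q ?_ hex
    exact insert_subset_insert (diff_subset_diff_left hIB)
  have hBsub : B ⊆ Q.closure B' := by
    intro g hg
    rcases eq_or_ne g f with rfl | hgf
    · exact hfB'
    · exact Q.subset_closure B' hB'E (Or.inr ⟨hg, hgf⟩)
  have hFcl : F ⊆ Q.closure B' := by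
    have h1 : Q.closure B ⊆ Q.closure B' := by
      rw [← Q.closure_closure B']
      exact Q.closure_subset_closure hBsub
    exact hB.subset_closure.trans h1
  obtain ⟨J, hJ⟩ := Q.exists_isBasis B' hB'E
  have hJF : Q.IsBasis J F := by
    refine hJ.indep.isBasis_of_subset_of_subset_closure
      (hJ.subset.trans (insert_subset he (diff_subset.trans hB.subset))) ?_
    rwa [hJ.closure_eq_closure]
  have hfJ : f ∉ J := fun h => by
    rcases hJ.subset h with h1 | h1
    · exact hfe h1
    · exact h1.2 rfl
  exact fun hco => hfJ (hco.2 J hJF.isBase_restrict)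

def IsFlag (N : Matroid α) (k : ℕ) (X : ℕ → Set α) : Prop :=
  (∀ i ≤ k, N.IsFlat (X i) ∧ rk N (X i) = i) ∧ ∀ i < k, X i ⊂ X (i + 1)

/-- If `F` is a flat of the free `m`-cone not containing the tip `a`, then every
element of `F \ E` is a coloop of the restriction `Q|F`. -/
theorem coloops_of_flat_without_tip {M Q : Matroid α} {T : α → Set α} {a : α} {m : ℕ}
    (hFC : FreeCone M Q T a m) (F : Set α) (hF : Q.IsFlat F) (haF : a ∉ F) :
    ∀ x ∈ F \ M.E, IsColoop (Q ↾ F) x := by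
  classical
  have hFE : F ⊆ Q.E := hF.subset_ground
  have hQfin : Q.E.Finite := by
    rw [hFC.hQE]
    exact ((hFC.hMfin.union (Set.Finite.biUnion hFC.hMfin hFC.hTfin)).union
      (Set.finite_singleton a))
  set Z : Set α := {e ∈ F | ¬ IsColoop (Q ↾ F) e} with hZdef
  have hZF : Z ⊆ F := fun e he => he.1
  have hZE : Z ⊆ Q.E := hZF.trans hFE
  -- Z is a flat of Q
  have hZflat : Q.IsFlat Z := by
    refine flat_of_closure_subset hZE fun y hy => ?_
    have hyF : y ∈ F := by
      have := Q.closure_subset_closure hZF hy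
      rwa [hF.closure] at this
    by_contra hyZ
    have hyco : IsColoop (Q ↾ F) y := by
      by_contra h
      exact hyZ ⟨hyF, h⟩
    obtain ⟨I, hI⟩ := Q.exists_isBasis Z hZE
    have hycl : y ∈ Q.closure I := by rwa [hI.closure_eq_closure]
    have hyI : y ∉ I := fun h => hyZ (hI.subset h)
    obtain ⟨J, hJF, hIJ⟩ := hI.indep.subset_isBasis_of_subset (hI.subset.trans hZF) hFE
    have hyJ : y ∈ J := hyco.2 J hJF.isBase_restrict
    have : y ∈ Q.closure (J \ {y}) :=
      Q.closure_subset_closure (subset_diff_singleton hIJ hyI) hycl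
    exact hJF.indep.notMem_closure_diff_of_mem hyJ this
  -- Z is a cyclic flat of Q
  have hZcyc : CyclicFlat Q Z := by
    refine ⟨hZflat, fun e heZ hco => ?_⟩
    obtain ⟨I, hIind, hIF, hInc, hecl, heI⟩ := key_lemma hQfin hF heZ.1 heZ.2
    have hIZ : I ⊆ Z := fun f hf => ⟨hIF hf, hInc f hf⟩
    obtain ⟨J, hJZ, hIJ⟩ := hIind.subset_isBasis_of_subset hIZ hZE
    have heJ : e ∉ J := fun h => by
      have : e ∈ Q.closure (J \ {e}) :=
        Q.closure_subset_closure (subset_diff_singleton hIJ heI) hecl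
      exact hJZ.indep.notMem_closure_diff_of_mem h this
    exact heJ (hco.2 J hJZ.isBase_restrict)
  -- apply the cyclic-flat description of the free cone
  rcases (hFC.hcyclic Z).1 hZcyc with hM | ⟨F', _, _, hFcone⟩
  · intro x hx
    by_contra h
    exact hx.2 (hM.1.subset_ground ⟨hx.1, h⟩)
  · exfalso
    have : a ∈ Z := hFcone ▸ (Or.inl (Or.inr rfl))
    exact haF (hZF this)

end ConePaper
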